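/- For m ≥ 1 and |z| < 1 (or as formal power series), ∑_{i ≥ 0} N(i+2m-1, 2m-1)·z^i = (1/2)·(1-z)^{-2m} + (1/2)·(1-z^2)^{-m}, where N denotes the necklace binomial coefficient. -/

import Mathlib

def neckN (t k : Nat) : Nat :=
  if t % 2 = 0 ∧ k % 2 = 1 then Nat.choose t k / 2
  else (Nat.choose t k + Nat.choose (t / 2) (k / 2)) / 2

open PowerSeries

noncomputable def neckBaux (m : ℕ) : PowerSeries ℚ :=
  PowerSeries.mk fun i => if Even i then (Nat.choose (i / 2 + m) m : ℚ) else 0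

lemma neck_coeff_mul_one_sub_X_sq (f : PowerSeries ℚ) (n : ℕ) :
    (coeff n) (f * (1 - X ^ 2)) =
      (coeff n) f - if 2 ≤ n then (coeff (n - 2)) f else 0 := by
  rw [mul_sub, mul_one, map_sub, coeff_mul_X_pow']

lemma neckBaux_mul (m : ℕ) : neckBaux m * (1 - X ^ 2) ^ (m + 1) = 1 := by
  induction m with
  | zero =>
    ext n
    rw [pow_one, neck_coeff_mul_one_sub_X_sq]
    simp only [neckBaux, coeff_mk]
    rcases n with _ | _ | n
    · simp
    · simp [Nat.even_iff]
    · have h2 : 2 ≤ n + 2 := by omega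
      have he : Even (n + 2 - 2) ↔ Even (n + 2) := by simp [Nat.even_iff]
      rw [if_pos h2]
      by_cases h : Even (n + 2)
      · rw [if_pos h, if_pos (he.mpr h), coeff_one, if_neg (by omega)]
        simp
      · rw [if_neg h, if_neg (fun hh => h (he.mp hh)), coeff_one, if_neg (by omega)]
        ring
  | succ m ih =>
    have step : neckBaux (m + 1) * (1 - X ^ 2) = neckBaux m := by
      ext n
      rw [neck_coeff_mul_one_sub_X_sq]
      simp only [neckBaux, coeff_mk]
      rcases n with _ | _ | n
      · simp
      · simp [Nat.even_iff]
      · have h2 : 2 ≤ n + 2 := by omega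
        have he : Even (n + 2 - 2) ↔ Even (n + 2) := by simp [Nat.even_iff]
        rw [if_pos h2]
        by_cases h : Even (n + 2)
        · rw [if_pos h, if_pos (he.mpr h), if_pos h]
          have hd : (n + 2 - 2) / 2 + (m + 1) = (n + 2) / 2 + m := by omega
          rw [hd, show (n + 2) / 2 + (m + 1) = ((n + 2) / 2 + m) + 1 from by omega,
            Nat.choose_succ_succ]
          push_cast
          ring
        · rw [if_neg h, if_neg (fun hh => h (he.mp hh)), if_neg h]
          ring
    calc neckBaux (m + 1) * (1 - X ^ 2) ^ (m + 1 + 1)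
        = (neckBaux (m + 1) * (1 - X ^ 2)) * (1 - X ^ 2) ^ (m + 1) := by ring
      _ = 1 := by rw [step, ih]

lemma neckN_key (m i : ℕ) (hm : 1 ≤ m) :
    2 * neckN (i + 2 * m - 1) (2 * m - 1) =
      Nat.choose (2 * m - 1 + i) (2 * m - 1) +
        if Even i then Nat.choose (i / 2 + (m - 1)) (m - 1) else 0 := by
  haveI : Fact (Nat.Prime 2) := ⟨Nat.prime_two⟩
  set t := i + 2 * m - 1 with htdef
  set k := 2 * m - 1 with hkdef
  have hk : k % 2 = 1 := by omega
  have hchoose : Nat.choose (2 * m - 1 + i) (2 * m - 1) = Nat.choose t k := by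
    rw [htdef, hkdef]; congr 1; omega
  have lucas : Nat.choose t k % 2 =
      (Nat.choose (t % 2) (k % 2) * Nat.choose (t / 2) (k / 2)) % 2 :=
    Choose.choose_modEq_choose_mod_mul_choose_div_nat (p := 2)
  rw [hchoose]
  rcases Nat.even_or_odd i with hi | hi
  · -- i even, t odd
    have hi2 : i % 2 = 0 := Nat.even_iff.mp hi
    have ht : t % 2 = 1 := by omega
    rw [ht, hk, Nat.choose_self, one_mul] at lucas
    have hdvd : 2 ∣ Nat.choose t k + Nat.choose (t / 2) (k / 2) := by omega
    have ht2 : t / 2 = i / 2 + (m - 1) := by omega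
    have hk2 : k / 2 = m - 1 := by omega
    rw [if_pos hi, neckN, if_neg (by omega), ht2, hk2]
    rw [ht2, hk2] at hdvd
    omega
  · -- i odd, t even
    have hi2 : i % 2 = 1 := Nat.odd_iff.mp hi
    have ht : t % 2 = 0 := by omega
    rw [ht, hk] at lucas
    simp only [Nat.choose_zero_succ, Nat.zero_mul, Nat.zero_mod] at lucas
    rw [if_neg (Nat.not_even_iff_odd.mpr hi), neckN, if_pos ⟨ht, hk⟩]
    omega

theorem neckN_column_gen_fun (m : ℕ) (hm : 1 ≤ m) :
    (PowerSeries.mk fun i => (neckN (i + 2 * m - 1) (2 * m - 1) : ℚ)) *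
        (2 * (1 - PowerSeries.X) ^ (2 * m) * (1 - PowerSeries.X ^ 2) ^ m) =
      (1 - PowerSeries.X ^ 2) ^ m + (1 - PowerSeries.X) ^ (2 * m) := by
  set A := (invOneSubPow ℚ (2 * m)).val with hAdef
  set B := neckBaux (m - 1) with hBdef
  have hA : A * (1 - X) ^ (2 * m) = 1 := by
    rw [hAdef, ← invOneSubPow_inv_eq_one_sub_pow]
    exact (invOneSubPow ℚ (2 * m)).val_inv
  have hB : B * (1 - X ^ 2) ^ m = 1 := by
    have := neckBaux_mul (m - 1)
    rwa [show m - 1 + 1 = m from by omega] at this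
  have hsum : 2 * (PowerSeries.mk fun i => (neckN (i + 2 * m - 1) (2 * m - 1) : ℚ)) =
      A + B := by
    rw [hAdef, invOneSubPow_val_eq_mk_sub_one_add_choose_of_pos ℚ (2 * m) (by omega)]
    ext n
    rw [two_mul, map_add, map_add, coeff_mk, coeff_mk]
    simp only [hBdef, neckBaux, coeff_mk]
    have key := neckN_key m n hm
    by_cases h : Even n
    · rw [if_pos h] at key ⊢
      rw [← Nat.cast_add, ← Nat.cast_add, ← two_mul]
      exact_mod_cast key
    · rw [if_neg h] at key ⊢
      rw [add_zero] at key
      rw [add_zero, ← Nat.cast_add, ← two_mul]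
      exact_mod_cast key
  calc (PowerSeries.mk fun i => (neckN (i + 2 * m - 1) (2 * m - 1) : ℚ)) *
        (2 * (1 - X) ^ (2 * m) * (1 - X ^ 2) ^ m)
      = (2 * PowerSeries.mk fun i => (neckN (i + 2 * m - 1) (2 * m - 1) : ℚ)) *
          (1 - X) ^ (2 * m) * (1 - X ^ 2) ^ m := by ring
    _ = (A + B) * (1 - X) ^ (2 * m) * (1 - X ^ 2) ^ m := by rw [hsum]
    _ = (A * (1 - X) ^ (2 * m)) * (1 - X ^ 2) ^ m +
          (B * (1 - X ^ 2) ^ m) * (1 - X) ^ (2 * m) := by ring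
    _ = (1 - X ^ 2) ^ m + (1 - X) ^ (2 * m) := by rw [hA, hB, one_mul, one_mul]
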